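/- Let f : ℝ → ℝ be a bounded measurable function, let μ ∈ ℝ, and for v > 0 let N(μ, v) denote the Gaussian measure on ℝ with mean μ and variance v. Then the map v ↦ E_{z ~ N(μ,v)}[f(z)] is differentiable on (0,∞), and its derivative equals E_{z ~ N(μ,v)}[ f(z) · ( (z−μ)²/(2v²) − 1/(2v) ) ]; that is, it equals the expectation of f times the derivative of the log-density of N(μ,v) with respect to the variance parameter. -/

import Mathlib

open MeasureTheory ProbabilityTheory Real NNReal ENNReal

private lemma integral_gaussianReal_eq' (μ : ℝ) {w : ℝ≥0} (hw : w ≠ 0) (g : ℝ → ℝ) :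
    ∫ z, g z ∂(gaussianReal μ w) = ∫ z, g z * gaussianPDFReal μ w z := by
  rw [gaussianReal_of_var_ne_zero _ hw]
  have h : (gaussianPDF μ w) = fun x => (((gaussianPDFReal μ w x).toNNReal : ℝ≥0) : ℝ≥0∞) := by
    funext x; rw [gaussianPDF, ENNReal.ofReal]
  rw [h, integral_withDensity_eq_integral_smul
    ((measurable_gaussianPDFReal μ w).real_toNNReal) g]
  congr 1; funext x
  rw [NNReal.smul_def, smul_eq_mul, Real.coe_toNNReal _ (gaussianPDFReal_nonneg μ w x), mul_comm]

private lemma pdf_hasDerivAt' (c : ℝ) {w : ℝ} (hw : 0 < w) :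
    HasDerivAt (fun w : ℝ => (Real.sqrt (2 * π * w))⁻¹ * rexp (-(c / (2 * w))))
      ((Real.sqrt (2 * π * w))⁻¹ * rexp (-(c / (2 * w))) * (c / (2 * w ^ 2) - 1 / (2 * w)))
      w := by
  have hπ : (0:ℝ) < π := Real.pi_pos
  have hs : 0 < Real.sqrt (2 * π * w) := Real.sqrt_pos.mpr (by positivity)
  have hs2 : (Real.sqrt (2 * π * w)) ^ 2 = 2 * π * w := Real.sq_sqrt (by positivity)
  have h0 : HasDerivAt (fun w : ℝ => Real.sqrt (2 * π * w))
      (1 / (2 * Real.sqrt (2 * π * w)) * (2 * π)) w := by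
    simpa [Function.comp_def] using (Real.hasDerivAt_sqrt (by positivity : 2 * π * w ≠ 0)).comp w
      ((hasDerivAt_id w).const_mul (2 * π))
  have h1 : HasDerivAt (fun w : ℝ => (Real.sqrt (2 * π * w))⁻¹)
      (-(1 / (2 * Real.sqrt (2 * π * w)) * (2 * π)) / (Real.sqrt (2 * π * w)) ^ 2) w :=
    h0.inv hs.ne'
  have h2 : HasDerivAt (fun w : ℝ => rexp (-(c / (2 * w))))
      (rexp (-(c / (2 * w))) * ((-c / 2) * (-(w ^ 2)⁻¹))) w := by
    have h3 : HasDerivAt (fun w : ℝ => -(c / (2 * w))) ((-c / 2) * (-(w ^ 2)⁻¹)) w := by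
      have := ((hasDerivAt_inv hw.ne').const_mul (-c / 2))
      convert this using 2
      · rfl
      · rfl
      · ring
    exact h3.exp
  have := h1.mul h2
  convert this using 1
  · rfl
  · rfl
  · rfl
  set s := Real.sqrt (2 * π * w) with hsdef
  set E := rexp (-(c / (2 * w))) with hEdef
  field_simp
  linear_combination (-E * w) * hs2

/-- Score-function (likelihood-ratio) identity for the variance of a Gaussian: for a bounded
measurable `f`, `μ ∈ ℝ`, and `v > 0`, the map `v ↦ E_{z ~ N(μ, v)}[f z]` is differentiable at
every `v > 0`, with derivative `E_{z ~ N(μ, v)}[f z · ((z - μ)²/(2v²) - 1/(2v))]`, the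
expectation of `f` times the derivative in `v` of the log-density of `N(μ, v)`. -/
theorem gaussian_score_gradient_variance
    (f : ℝ → ℝ) (hf : Measurable f) (hbdd : ∃ M : ℝ, ∀ z, |f z| ≤ M)
    (μ : ℝ) (v : ℝ) (hv : 0 < v) :
    HasDerivAt (fun w : ℝ => ∫ z, f z ∂(gaussianReal μ w.toNNReal))
      (∫ z, f z * ((z - μ) ^ 2 / (2 * v ^ 2) - 1 / (2 * v)) ∂(gaussianReal μ v.toNNReal))
      v := by
  obtain ⟨M, hM⟩ := hbdd
  have hM0 : 0 ≤ M := le_trans (abs_nonneg _) (hM 0)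
  have hπ : (0:ℝ) < π := Real.pi_pos
  set b : ℝ := (3 * v)⁻¹ with hbdef
  have hb : 0 < b := by positivity
  set F : ℝ → ℝ → ℝ := fun w z =>
    f z * ((Real.sqrt (2 * π * w))⁻¹ * rexp (-((z - μ) ^ 2 / (2 * w)))) with hF
  set F' : ℝ → ℝ → ℝ := fun w z =>
    f z * ((Real.sqrt (2 * π * w))⁻¹ * rexp (-((z - μ) ^ 2 / (2 * w))) *
      ((z - μ) ^ 2 / (2 * w ^ 2) - 1 / (2 * w))) with hF'
  -- pdf identification for positive variance
  have hpdf : ∀ {w : ℝ}, 0 < w → ∀ z, gaussianPDFReal μ w.toNNReal z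
      = (Real.sqrt (2 * π * w))⁻¹ * rexp (-((z - μ) ^ 2 / (2 * w))) := by
    intro w hw z
    rw [gaussianPDFReal, Real.coe_toNNReal _ hw.le, neg_div]
  have hmeasF : ∀ w : ℝ, AEStronglyMeasurable (F w) volume := by
    intro w
    refine (hf.mul ?_).aestronglyMeasurable
    fun_prop
  have hmeasF' : AEStronglyMeasurable (F' v) volume := by
    refine (hf.mul ?_).aestronglyMeasurable
    fun_prop
  -- bound
  set bound : ℝ → ℝ := fun z =>
    (M * (Real.sqrt (π * v))⁻¹ * (2 / v ^ 2)) * ((z - μ) ^ 2 * rexp (-(b * (z - μ) ^ 2)))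
      + (M * (Real.sqrt (π * v))⁻¹ * (1 / v)) * rexp (-(b * (z - μ) ^ 2)) with hbound
  have bound_integrable : Integrable bound volume := by
    have i1 : Integrable (fun x : ℝ => x ^ 2 * rexp (-(b * x ^ 2))) volume := by
      have := integrable_rpow_mul_exp_neg_mul_sq hb (s := 2) (by norm_num)
      simpa [Real.rpow_two, neg_mul] using this
    have i2 : Integrable (fun x : ℝ => rexp (-(b * x ^ 2))) volume := by
      simpa [neg_mul] using integrable_exp_neg_mul_sq hb
    exact ((i1.comp_sub_right μ).const_mul _).add ((i2.comp_sub_right μ).const_mul _)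
  have h_bound : ∀ᵐ z : ℝ, ∀ w ∈ Metric.ball v (v / 2), ‖F' w z‖ ≤ bound z := by
    refine ae_of_all _ fun z w hw => ?_
    rw [Metric.mem_ball, Real.dist_eq, abs_sub_lt_iff] at hw
    have hw1 : v / 2 < w := by linarith [hw.2]
    have hw2 : w < 3 * v / 2 := by linarith [hw.1]
    have hwpos : 0 < w := lt_trans (by positivity) hw1
    set c : ℝ := (z - μ) ^ 2 with hc
    have hc0 : 0 ≤ c := sq_nonneg _
    have hs : 0 < Real.sqrt (2 * π * w) := Real.sqrt_pos.mpr (by positivity)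
    have habs : ‖F' w z‖ = |f z| * ((Real.sqrt (2 * π * w))⁻¹ * rexp (-(c / (2 * w))) *
        |c / (2 * w ^ 2) - 1 / (2 * w)|) := by
      rw [hF', Real.norm_eq_abs, abs_mul, abs_mul]
      rw [abs_of_nonneg (by positivity : (0:ℝ) ≤ (Real.sqrt (2 * π * w))⁻¹ * rexp (-(c / (2 * w))))]
    rw [habs]
    have ht : |c / (2 * w ^ 2) - 1 / (2 * w)| ≤ c / (2 * w ^ 2) + 1 / (2 * w) := by
      refine (abs_sub _ _).trans ?_
      rw [abs_of_nonneg (by positivity), abs_of_nonneg (by positivity)]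
    have hA : (Real.sqrt (2 * π * w))⁻¹ ≤ (Real.sqrt (π * v))⁻¹ := by
      refine inv_anti₀ (Real.sqrt_pos.mpr (by positivity)) ?_
      exact Real.sqrt_le_sqrt (by nlinarith)
    have hB : rexp (-(c / (2 * w))) ≤ rexp (-(c / (3 * v))) := by
      refine Real.exp_le_exp.mpr (neg_le_neg ?_)
      exact div_le_div_of_nonneg_left hc0 (by positivity) (by linarith)
    have hC : c / (2 * w ^ 2) + 1 / (2 * w) ≤ c / (2 * (v / 2) ^ 2) + 1 / (2 * (v / 2)) := by
      refine add_le_add ?_ ?_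
      · exact div_le_div_of_nonneg_left hc0 (by positivity) (by nlinarith)
      · exact one_div_le_one_div_of_le (by positivity) (by linarith)
    calc |f z| * ((Real.sqrt (2 * π * w))⁻¹ * rexp (-(c / (2 * w))) *
            |c / (2 * w ^ 2) - 1 / (2 * w)|)
        ≤ M * ((Real.sqrt (π * v))⁻¹ * rexp (-(c / (3 * v))) *
            (c / (2 * (v / 2) ^ 2) + 1 / (2 * (v / 2)))) := by
          refine mul_le_mul (hM z) ?_ (by positivity) hM0
          exact mul_le_mul (mul_le_mul hA hB (by positivity) (by positivity))
            (ht.trans hC) (abs_nonneg _) (by positivity)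
      _ = bound z := by
          rw [hbound, hbdef]
          have h9 : -(c / (3 * v)) = -((3 * v)⁻¹ * c) := by ring
          rw [h9, hc]
          ring
  have h_diff : ∀ᵐ z : ℝ, ∀ w ∈ Metric.ball v (v / 2), HasDerivAt (F · z) (F' w z) w := by
    refine ae_of_all _ fun z w hw => ?_
    rw [Metric.mem_ball, Real.dist_eq, abs_sub_lt_iff] at hw
    have hwpos : 0 < w := by linarith [hw.2]
    exact (pdf_hasDerivAt' ((z - μ) ^ 2) hwpos).const_mul (f z)
  have hvNN : v.toNNReal ≠ 0 := (Real.toNNReal_pos.mpr hv).ne'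
  have hF_int : Integrable (F v) volume := by
    have : Integrable (fun z => f z * gaussianPDFReal μ v.toNNReal z) volume :=
      (integrable_gaussianPDFReal μ v.toNNReal).bdd_mul hf.aestronglyMeasurable
        (ae_of_all _ fun z => by simpa using hM z)
    refine this.congr (ae_of_all _ fun z => ?_)
    simp only [hF, hpdf hv]
  have key := hasDerivAt_integral_of_dominated_loc_of_deriv_le
    (Metric.ball_mem_nhds v (by positivity : (0:ℝ) < v / 2))
    (Filter.Eventually.of_forall hmeasF) hF_int hmeasF' h_bound bound_integrable h_diff
  have hderiv := key.2
  -- identify the derivative value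
  have hval : (∫ z, f z * ((z - μ) ^ 2 / (2 * v ^ 2) - 1 / (2 * v)) ∂(gaussianReal μ v.toNNReal))
      = ∫ z, F' v z := by
    rw [integral_gaussianReal_eq' μ hvNN]
    congr 1; funext z
    simp only [hF', hpdf hv]; ring
  rw [hval]
  -- identify the functions near v
  refine hderiv.congr_of_eventuallyEq ?_
  filter_upwards [eventually_gt_nhds hv] with w hw
  rw [integral_gaussianReal_eq' μ (Real.toNNReal_pos.mpr hw).ne']
  congr 1; funext z
  simp only [hF, hpdf hw]
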